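/- For a connected cubic plane graph Γ with edge set E, the total number of proper 4-face-colorings of Γ equals 4 times the sum, over all α ∈ {0,1}^{E}, of the number of proper 3-face-colorings of the state graph Γ_α. -/

import Mathlib

/-!
A combinatorial map (rotation system): darts `D`, vertex rotation `σ`,
edge involution `α` (fixed-point free).  Vertices are the cycles of `σ`,
edges the cycles of `α`, and faces the cycles of `φ = σ * α`.
Planarity of a connected map is expressed by Euler's formula `V + F = E + 2`.
-/

structure CombMap where
  D : Type
  [fin : Fintype D]
  [deq : DecidableEq D]
  σ : Equiv.Perm D
  α : Equiv.Perm D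
  α_invol : ∀ d, α (α d) = d
  α_fpf : ∀ d, α d ≠ d

attribute [instance] CombMap.fin CombMap.deq

namespace CombMap

variable (M : CombMap)

/-- The face permutation. -/
def φ : Equiv.Perm M.D := M.σ * M.α

/-- Every vertex is trivalent. -/
def Cubic : Prop := (∀ d, M.σ (M.σ (M.σ d)) = d) ∧ ∀ d, M.σ d ≠ d

/-- The map is connected. -/
def Connected : Prop :=
  ∀ d e : M.D, Relation.ReflTransGen (fun x y => M.σ x = y ∨ M.α x = y) d e

def sameCycleSetoid (f : Equiv.Perm M.D) : Setoid M.D where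
  r := f.SameCycle
  iseqv := ⟨fun x => Equiv.Perm.SameCycle.refl f x, fun h => h.symm, fun h h' => h.trans h'⟩

/-- The number of cycles (orbits) of a permutation of the darts. -/
noncomputable def numCycles (f : Equiv.Perm M.D) : ℕ := Nat.card (Quotient (M.sameCycleSetoid f))

/-- A connected map is planar iff Euler's formula `V - E + F = 2` holds. -/
def Planar : Prop :=
  M.Connected ∧ M.numCycles M.σ + M.numCycles M.φ = M.numCycles M.α + 2

/-- No edge has the same face on both of its sides (for a plane graph this
is equivalent to having no bridge). -/
def Bridgeless : Prop := ∀ d, ¬ M.φ.SameCycle d (M.α d)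

/-- A proper `n`-face-coloring, encoded as a function on darts that is
constant on faces and assigns different colors to the two sides of each edge. -/
def FaceColoring (n : ℕ) (c : M.D → Fin n) : Prop :=
  (∀ d, c (M.φ d) = c d) ∧ ∀ d, c d ≠ c (M.α d)

/-- A proper `n`-edge-coloring, encoded as a function on darts that is
constant on edges and assigns different colors to distinct edges at a vertex. -/
def EdgeColoring (n : ℕ) (c : M.D → Fin n) : Prop :=
  (∀ d, c (M.α d) = c d) ∧ ∀ d, c d ≠ c (M.σ d)

end CombMap


namespace CombMap
variable (M : CombMap)

/-!
State graphs.  For a twist assignment `t` on the edges (a half-twisted band where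
`t = true`), the faces of the resulting state-graph surface are the boundary
circles of the twisted ribbon graph.  We traverse these circles through the
boundary *segments* `M.D × Bool` (the two band-side pieces at each dart): `nextSeg`
moves along a circle across an edge band and around a vertex disk, and `sideMate`
identifies the two halves of one and the same band side.
-/

/-- One step along a boundary circle of the twisted ribbon graph. -/
def nextSeg (t : M.D → Bool) (x : M.D × Bool) : M.D × Bool :=
  if Bool.xor x.2 (!(t x.1)) then (M.σ (M.α x.1), false) else (M.σ⁻¹ (M.α x.1), true)

/-- The other half of the same band side. -/
def sideMate (t : M.D → Bool) (x : M.D × Bool) : M.D × Bool :=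
  (M.α x.1, Bool.xor x.2 (!(t x.1)))

/-- A proper `n`-face-coloring of the state graph `Γ_t`: a coloring of the boundary
circles (encoded on segments, constant along each circle) such that the two faces
adjacent along any edge of the graph receive different colors. -/
def IsStateColoring (t : M.D → Bool) (n : ℕ) (c : M.D × Bool → Fin n) : Prop :=
  (∀ x, c (M.nextSeg t x) = c x) ∧ (∀ x, c (M.sideMate t x) = c x) ∧
  ∀ d : M.D, c (d, false) ≠ c (d, true)

end CombMap

namespace FCTaux

open CombMap

abbrev A : Type := ZMod 2 × ZMod 2

lemma Aadd (a : A) : a + a = 0 := by revert a; decide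
lemma Aneg (a : A) : -a = a := by revert a; decide
lemma Aeq_of_add (a b : A) (h : a + b = 0) : b = a := by
  have := eq_neg_of_add_eq_zero_right h
  rwa [Aneg] at this

variable (M : CombMap)

section CubicFacts
variable (hcub : M.Cubic)
include hcub

lemma sigma_sq_ne (d : M.D) : M.σ (M.σ d) ≠ d := by
  intro h
  have h2 := congrArg M.σ h
  rw [hcub.1 d] at h2
  exact hcub.2 d h2.symm

lemma sigma_inv_eq (d : M.D) : M.σ⁻¹ d = M.σ (M.σ d) := by
  apply M.σ.injective
  rw [← Equiv.Perm.mul_apply, mul_inv_cancel, Equiv.Perm.one_apply, hcub.1]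

lemma sigma_pow3 : M.σ ^ 3 = 1 := by
  ext d
  simp only [pow_succ, pow_zero, one_mul, Equiv.Perm.mul_apply, Equiv.Perm.one_apply]
  exact hcub.1 d

lemma sameCycle_sigma_iff (x d : M.D) :
    M.σ.SameCycle x d ↔ d = x ∨ d = M.σ x ∨ d = M.σ (M.σ x) := by
  constructor
  · rintro ⟨i, rfl⟩
    have h3 : M.σ ^ (3:ℤ) = 1 := by
      rw [show (3:ℤ) = ((3:ℕ):ℤ) from rfl, zpow_natCast, sigma_pow3 M hcub]
    have hi : M.σ ^ i = M.σ ^ (i % 3) := by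
      conv_lhs => rw [← Int.mul_ediv_add_emod i 3]
      rw [zpow_add, zpow_mul, h3, one_zpow, one_mul]
    have h0 : 0 ≤ i % 3 := Int.emod_nonneg i (by norm_num)
    have h2 : i % 3 < 3 := Int.emod_lt_of_pos i (by norm_num)
    rw [hi]
    set r := i % 3 with hr
    interval_cases r
    · left; simp
    · right; left; simp
    · right; right
      rw [show (2:ℤ) = ((2:ℕ):ℤ) from rfl, zpow_natCast]
      simp [pow_succ, Equiv.Perm.mul_apply]
  · rintro (rfl | rfl | rfl)
    · exact ⟨0, by simp⟩
    · exact ⟨1, by simp⟩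
    · exact ⟨2, by
        rw [show (2:ℤ) = ((2:ℕ):ℤ) from rfl, zpow_natCast]
        simp [pow_succ, Equiv.Perm.mul_apply]⟩

lemma orbit_ne1 (x : M.D) : M.σ x ≠ x := hcub.2 x
lemma orbit_ne2 (x : M.D) : M.σ (M.σ x) ≠ x := sigma_sq_ne M hcub x
lemma orbit_ne3 (x : M.D) : M.σ (M.σ x) ≠ M.σ x := fun h => hcub.2 x (M.σ.injective h)

end CubicFacts

lemma phi_alpha (d : M.D) : M.φ (M.α d) = M.σ d := by
  show (M.σ * M.α) (M.α d) = M.σ d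
  rw [Equiv.Perm.mul_apply, M.α_invol]

/-- counting invariant functions -/
lemma invariant_card (f : Equiv.Perm M.D) (B : Type) [Fintype B] :
    Nat.card {c : M.D → B // ∀ d, c (f d) = c d} = Nat.card B ^ M.numCycles f := by
  have key : ∀ (c : M.D → B), (∀ d, c (f d) = c d) → ∀ (i : ℤ) (x : M.D), c ((f ^ i) x) = c x := by
    intro c hc
    have hn : ∀ (n : ℕ) (x : M.D), c ((f ^ n) x) = c x := by
      intro n
      induction n with
      | zero => simp
      | succ n ih =>
        intro x
        rw [pow_succ, Equiv.Perm.mul_apply, ih (f x), hc x]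
    intro i x
    rcases i with n | n
    · exact hn n x
    · rw [Int.negSucc_eq, zpow_neg,
        show ((n:ℤ)+1) = ((n+1:ℕ):ℤ) by push_cast; ring, zpow_natCast]
      have h5 := hn (n+1) ((f ^ (n+1))⁻¹ x)
      rw [← Equiv.Perm.mul_apply, mul_inv_cancel, Equiv.Perm.one_apply] at h5
      exact h5.symm
  have e : {c : M.D → B // ∀ d, c (f d) = c d} ≃ (Quotient (M.sameCycleSetoid f) → B) :=
  { toFun := fun c => Quotient.lift c.1 (fun a b hab => by
      obtain ⟨i, hi⟩ := hab
      rw [← hi]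
      exact (key c.1 c.2 i a).symm)
    invFun := fun q => ⟨fun d => q (Quotient.mk _ d), fun d => by
      apply congrArg q
      apply Quotient.sound
      exact Equiv.Perm.SameCycle.symm ⟨1, by simp⟩⟩
    left_inv := fun c => Subtype.ext rfl
    right_inv := fun q => funext fun y => Quotient.inductionOn y (fun d => rfl) }
  rw [Nat.card_congr e, Nat.card_fun]
  rfl

lemma nonempty_D (hplanar : M.Planar) : Nonempty M.D := by
  by_contra h
  rw [not_nonempty_iff] at h
  have hz : ∀ f : Equiv.Perm M.D, M.numCycles f = 0 := by
    intro f
    have : IsEmpty (Quotient (M.sameCycleSetoid f)) :=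
      ⟨fun q => Quotient.inductionOn q (fun d => h.elim d)⟩
    exact Nat.card_of_isEmpty
  have := hplanar.2
  rw [hz, hz, hz] at this
  omega

end FCTaux

namespace FCTaux

variable (M : CombMap)

/-- Face-potentials. -/
def potS : AddSubgroup (M.D → A) where
  carrier := {c | ∀ d, c (M.φ d) = c d}
  zero_mem' := fun _ => rfl
  add_mem' := by intro a b ha hb d; simp only [Pi.add_apply, ha d, hb d]
  neg_mem' := by intro a ha d; simp only [Pi.neg_apply, ha d]

/-- Edge-symmetric functions. -/
def symS : AddSubgroup (M.D → A) where
  carrier := {c | ∀ d, c (M.α d) = c d}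
  zero_mem' := fun _ => rfl
  add_mem' := by intro a b ha hb d; simp only [Pi.add_apply, ha d, hb d]
  neg_mem' := by intro a ha d; simp only [Pi.neg_apply, ha d]

/-- Vertex functions. -/
def vertS : AddSubgroup (M.D → A) where
  carrier := {c | ∀ d, c (M.σ d) = c d}
  zero_mem' := fun _ => rfl
  add_mem' := by intro a b ha hb d; simp only [Pi.add_apply, ha d, hb d]
  neg_mem' := by intro a ha d; simp only [Pi.neg_apply, ha d]

/-- Flows. -/
def flowS : AddSubgroup (M.D → A) where
  carrier := {f | (∀ d, f (M.α d) = f d) ∧ ∀ d, f d + f (M.σ d) + f (M.σ (M.σ d)) = 0}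
  zero_mem' := ⟨fun _ => rfl, fun _ => by simp⟩
  add_mem' := by
    rintro a b ⟨ha1, ha2⟩ ⟨hb1, hb2⟩
    refine ⟨fun d => by simp only [Pi.add_apply, ha1 d, hb1 d], fun d => ?_⟩
    simp only [Pi.add_apply]
    have := ha2 d; have := hb2 d
    have hrearr : ∀ x1 x2 x3 y1 y2 y3 : A, x1+x2+x3 = 0 → y1+y2+y3 = 0 →
        (x1+y1)+(x2+y2)+(x3+y3) = 0 := by decide
    exact hrearr _ _ _ _ _ _ (ha2 d) (hb2 d)
  neg_mem' := by
    rintro a ⟨ha1, ha2⟩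
    refine ⟨fun d => by simp only [Pi.neg_apply, ha1 d], fun d => ?_⟩
    simp only [Pi.neg_apply]
    rw [Aneg, Aneg, Aneg]
    exact ha2 d

/-- Vertex functions with zero total sum. -/
def zS : AddSubgroup (M.D → A) where
  carrier := {g | (∀ d, g (M.σ d) = g d) ∧ ∑ d, g d = 0}
  zero_mem' := ⟨fun _ => rfl, by simp⟩
  add_mem' := by
    rintro a b ⟨ha1, ha2⟩ ⟨hb1, hb2⟩
    refine ⟨fun d => by simp only [Pi.add_apply, ha1 d, hb1 d], ?_⟩
    simp only [Pi.add_apply, Finset.sum_add_distrib, ha2, hb2, add_zero]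
  neg_mem' := by
    rintro a ⟨ha1, ha2⟩
    refine ⟨fun d => by simp only [Pi.neg_apply, ha1 d], ?_⟩
    simp only [Pi.neg_apply, Finset.sum_neg_distrib, ha2, neg_zero]

def psiHom : (M.D → A) →+ (M.D → A) where
  toFun c := fun d => c d + c (M.α d)
  map_zero' := by funext d; simp
  map_add' := by intro a b; funext d; simp only [Pi.add_apply]; abel

def bdryHom : (M.D → A) →+ (M.D → A) where
  toFun f := fun d => f d + f (M.σ d) + f (M.σ (M.σ d))
  map_zero' := by funext d; simp
  map_add' := by intro a b; funext d; simp only [Pi.add_apply]; abel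

def psi' : ↥(potS M) →+ (M.D → A) := (psiHom M).comp (potS M).subtype
def bdry' : ↥(symS M) →+ (M.D → A) := (bdryHom M).comp (symS M).subtype

def sumHom : ↥(vertS M) →+ A where
  toFun g := ∑ d, g.1 d
  map_zero' := by simp
  map_add' := by intro a b; simp [Finset.sum_add_distrib]

lemma card_hom {G H : Type*} [AddGroup G] [AddGroup H] [Finite G] (φ : G →+ H) :
    Nat.card G = Nat.card φ.range * Nat.card φ.ker := by
  rw [AddSubgroup.card_eq_card_quotient_mul_card_addSubgroup φ.ker,
    Nat.card_congr (QuotientAddGroup.quotientKerEquivRange φ).toEquiv]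

lemma hA4 : Nat.card A = 4 := by
  rw [Nat.card_eq_fintype_card]; rfl

lemma card_potS : Nat.card (potS M) = 4 ^ M.numCycles M.φ := by
  rw [← hA4, ← invariant_card M M.φ A]
  exact Nat.card_congr (Equiv.subtypeEquivRight (fun c => Iff.rfl))

lemma card_symS : Nat.card (symS M) = 4 ^ M.numCycles M.α := by
  rw [← hA4, ← invariant_card M M.α A]
  exact Nat.card_congr (Equiv.subtypeEquivRight (fun c => Iff.rfl))

lemma card_vertS : Nat.card (vertS M) = 4 ^ M.numCycles M.σ := by
  rw [← hA4, ← invariant_card M M.σ A]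
  exact Nat.card_congr (Equiv.subtypeEquivRight (fun c => Iff.rfl))

lemma const_of_steps (hconn : M.Connected) (k : M.D → A)
    (hσ : ∀ d, k (M.σ d) = k d) (hα : ∀ d, k (M.α d) = k d) (x y : M.D) : k x = k y := by
  induction hconn x y with
  | refl => rfl
  | tail hxb step ih =>
    rcases step with h | h
    · rw [← h, hσ]; exact ih
    · rw [← h, hα]; exact ih

lemma psiKer_card (hconn : M.Connected) (d0 : M.D) : Nat.card (psi' M).ker = 4 := by
  rw [← hA4]
  refine Nat.card_congr ⟨fun x => x.1.1 d0, fun a => ⟨⟨fun _ => a, fun _ => rfl⟩, ?_⟩, ?_, fun a => rfl⟩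
  · rw [AddMonoidHom.mem_ker]
    funext d
    exact Aadd a
  · rintro ⟨⟨k, hk⟩, hker⟩
    rw [AddMonoidHom.mem_ker] at hker
    have hα : ∀ d, k (M.α d) = k d := by
      intro d
      exact Aeq_of_add _ _ (congrFun hker d)
    have hσ : ∀ d, k (M.σ d) = k d := by
      intro d
      rw [← phi_alpha M d, hk (M.α d), hα d]
    apply Subtype.ext; apply Subtype.ext
    funext d
    exact const_of_steps M hconn k hσ hα d0 d

lemma psiRange_le (hcub : M.Cubic) : (psi' M).range ≤ flowS M := by
  rintro f ⟨⟨c, hc⟩, rfl⟩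
  constructor
  · intro d
    show c (M.α d) + c (M.α (M.α d)) = c d + c (M.α d)
    rw [M.α_invol, add_comm]
  · intro d
    show (c d + c (M.α d)) + (c (M.σ d) + c (M.α (M.σ d))) + (c (M.σ (M.σ d)) + c (M.α (M.σ (M.σ d)))) = 0
    have hca : ∀ x, c (M.α x) = c (M.σ x) := by
      intro x
      rw [← phi_alpha M x, hc (M.α x)]
    rw [hca d, hca (M.σ d), hca (M.σ (M.σ d)), hcub.1 d]
    have : ∀ a b e : A, a + b + (b + e) + (e + a) = 0 := by decide
    exact this _ _ _

lemma bdryRange_le (hcub : M.Cubic) : (bdry' M).range ≤ zS M := by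
  rintro g ⟨⟨f, hf⟩, rfl⟩
  constructor
  · intro d
    show f (M.σ d) + f (M.σ (M.σ d)) + f (M.σ (M.σ (M.σ d))) = f d + f (M.σ d) + f (M.σ (M.σ d))
    rw [hcub.1 d]
    exact (add_rotate (f d) (f (M.σ d)) (f (M.σ (M.σ d)))).symm
  · show ∑ d, (f d + f (M.σ d) + f (M.σ (M.σ d))) = 0
    rw [Finset.sum_add_distrib, Finset.sum_add_distrib]
    have h1 : ∑ d, f (M.σ d) = ∑ d, f d := Equiv.sum_comp M.σ f
    have h2 : ∑ d, f (M.σ (M.σ d)) = ∑ d, f d := Equiv.sum_comp (M.σ.trans M.σ) f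
    have h0 : ∑ d, f d = 0 := by
      apply Finset.sum_involution (fun a _ => M.α a)
      · intro a _
        rw [hf a]; exact Aadd _
      · intro a _ _
        exact M.α_fpf a
      · intro a ha; exact Finset.mem_univ _
      · intro a ha; exact M.α_invol a
    rw [h1, h2, h0]
    simp

lemma card_flowS_eq : Nat.card (flowS M) = Nat.card (bdry' M).ker := by
  refine Nat.card_congr ⟨fun x => ⟨⟨x.1, x.2.1⟩, ?_⟩, fun y => ⟨y.1.1, y.1.2, fun d => congrFun y.2 d⟩, ?_, ?_⟩
  · rw [AddMonoidHom.mem_ker]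
    funext d
    exact x.2.2 d
  · rintro ⟨f, hf⟩; rfl
  · rintro ⟨⟨f, hf⟩, hker⟩; rfl


def chi (x : M.D) (a : A) : M.D → A :=
  fun d => if M.σ.SameCycle x d then a else 0

lemma chi_pos {x d : M.D} (h : M.σ.SameCycle x d) (a : A) : chi M x a d = a := if_pos h
lemma chi_neg {x d : M.D} (h : ¬ M.σ.SameCycle x d) (a : A) : chi M x a d = 0 := if_neg h

lemma chi_vert (x : M.D) (a : A) : ∀ d, chi M x a (M.σ d) = chi M x a d := by
  intro d
  unfold chi
  exact if_congr Equiv.Perm.sameCycle_apply_right rfl rfl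

lemma chi_eq_of_sameCycle {x y : M.D} (h : M.σ.SameCycle x y) (a : A) :
    chi M x a = chi M y a := by
  funext d
  exact if_congr ⟨fun h' => h.symm.trans h', fun h' => h.trans h'⟩ rfl rfl

lemma chi_sum (hcub : M.Cubic) (x : M.D) (a : A) : ∑ d, chi M x a d = a := by
  unfold chi
  rw [← Finset.sum_filter]
  have hset : Finset.univ.filter (fun d => M.σ.SameCycle x d) =
      ({x, M.σ x, M.σ (M.σ x)} : Finset M.D) := by
    ext d
    simp only [Finset.mem_filter, Finset.mem_univ, true_and, Finset.mem_insert,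
      Finset.mem_singleton, sameCycle_sigma_iff M hcub x d]
  have h12 : x ∉ ({M.σ x, M.σ (M.σ x)} : Finset M.D) := by
    simp only [Finset.mem_insert, Finset.mem_singleton]
    push_neg
    exact ⟨(orbit_ne1 M hcub x).symm, (orbit_ne2 M hcub x).symm⟩
  have h23 : M.σ x ∉ ({M.σ (M.σ x)} : Finset M.D) := by
    simp only [Finset.mem_singleton]
    exact (orbit_ne3 M hcub x).symm
  rw [hset, Finset.sum_const, Finset.card_insert_of_notMem h12,
    Finset.card_insert_of_notMem h23, Finset.card_singleton,
    show (1+1+1:ℕ) = 2+1 from rfl, add_nsmul, two_nsmul, one_nsmul, Aadd, zero_add]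

lemma chi_mem_vertS (x : M.D) (a : A) : chi M x a ∈ vertS M := chi_vert M x a

lemma sumHom_surj (hcub : M.Cubic) (d0 : M.D) : Function.Surjective (sumHom M) := by
  intro a
  exact ⟨⟨chi M d0 a, chi_mem_vertS M d0 a⟩, chi_sum M hcub d0 a⟩

lemma card_zS (hcub : M.Cubic) (d0 : M.D) : 4 * Nat.card (zS M) = 4 ^ M.numCycles M.σ := by
  have h1 := card_hom (sumHom M)
  rw [card_vertS M] at h1
  rw [h1]
  have h2 : Nat.card (sumHom M).range = 4 := by
    rw [(AddMonoidHom.range_eq_top).mpr (sumHom_surj M hcub d0)]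
    rw [← hA4]
    exact Nat.card_congr AddSubgroup.topEquiv.toEquiv
  have h3 : Nat.card (sumHom M).ker = Nat.card (zS M) := by
    refine Nat.card_congr ⟨fun k => ⟨k.1.1, k.1.2, k.2⟩, fun z => ⟨⟨z.1, z.2.1⟩, z.2.2⟩, ?_, ?_⟩
    · rintro ⟨⟨g, hg⟩, hk⟩; rfl
    · rintro ⟨g, hg⟩; rfl
  rw [h2, h3]

/-- The key generators lemma. -/
lemma edge_gen (hcub : M.Cubic) (b : M.D) (a : A) (h : ¬ M.σ.SameCycle b (M.α b)) :
    chi M b a + chi M (M.α b) a ∈ (bdry' M).range := by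
  set f : M.D → A := fun d => if d = b ∨ d = M.α b then a else 0 with hfdef
  have hsym : ∀ d, f (M.α d) = f d := by
    intro d
    have hiff : (M.α d = b ∨ M.α d = M.α b) ↔ (d = b ∨ d = M.α b) := by
      constructor
      · rintro (h' | h')
        · right; rw [← h', M.α_invol]
        · left; exact M.α.injective h'
      · rintro (rfl | rfl)
        · right; rfl
        · left; exact M.α_invol b
    show (if M.α d = b ∨ M.α d = M.α b then a else 0) = (if d = b ∨ d = M.α b then a else 0)
    exact if_congr hiff rfl rfl
  refine ⟨⟨f, hsym⟩, ?_⟩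
  show (fun d => f d + f (M.σ d) + f (M.σ (M.σ d))) = chi M b a + chi M (M.α b) a
  have hnotb : ∀ d, M.σ.SameCycle b d → d ≠ M.α b := fun d hd h' => h (h' ▸ hd)
  have hnotab : ∀ d, M.σ.SameCycle (M.α b) d → d ≠ b := fun d hd h' => h (h' ▸ hd).symm
  have hsc1 : ∀ d : M.D, M.σ.SameCycle d (M.σ d) := fun d => ⟨1, by simp⟩
  have hsc2 : ∀ d : M.D, M.σ.SameCycle d (M.σ (M.σ d)) := fun d => (hsc1 d).trans (hsc1 _)
  funext d
  show f d + f (M.σ d) + f (M.σ (M.σ d)) = chi M b a d + chi M (M.α b) a d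
  have hf_of_not : ∀ e, ¬ M.σ.SameCycle b e → ¬ M.σ.SameCycle (M.α b) e → f e = 0 := by
    intro e h1 h2
    apply if_neg
    rintro (rfl | rfl)
    · exact h1 (Equiv.Perm.SameCycle.refl _ _)
    · exact h2 (Equiv.Perm.SameCycle.refl _ _)
  by_cases hd1 : M.σ.SameCycle b d
  · by_cases hd2 : M.σ.SameCycle (M.α b) d
    · exact absurd (hd1.trans hd2.symm) h
    · rw [chi_pos M hd1 a, chi_neg M hd2 a, add_zero]
      have hne : ∀ e, M.σ.SameCycle b e → f e = if e = b then a else 0 := by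
        intro e he
        show (if e = b ∨ e = M.α b then a else 0) = _
        by_cases hb : e = b
        · rw [if_pos (Or.inl hb), if_pos hb]
        · rw [if_neg, if_neg hb]
          rintro (h' | h')
          · exact hb h'
          · exact hnotb e he h'
      rw [hne d hd1, hne (M.σ d) (hd1.trans (hsc1 d)), hne (M.σ (M.σ d)) (hd1.trans (hsc2 d))]
      rcases (sameCycle_sigma_iff M hcub b d).mp hd1 with rfl | rfl | rfl
      · rw [if_pos rfl, if_neg (orbit_ne1 M hcub d), if_neg (orbit_ne2 M hcub d)]
        simp
      · rw [hcub.1 b, if_neg (orbit_ne1 M hcub b), if_neg (orbit_ne2 M hcub b), if_pos rfl]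
        simp
      · rw [hcub.1 b, if_neg (orbit_ne2 M hcub b), if_pos rfl, if_neg (orbit_ne1 M hcub b)]
        simp
  · by_cases hd2 : M.σ.SameCycle (M.α b) d
    · rw [chi_neg M hd1 a, chi_pos M hd2 a, zero_add]
      have hne : ∀ e, M.σ.SameCycle (M.α b) e → f e = if e = M.α b then a else 0 := by
        intro e he
        show (if e = b ∨ e = M.α b then a else 0) = _
        by_cases hb : e = M.α b
        · rw [if_pos (Or.inr hb), if_pos hb]
        · rw [if_neg, if_neg hb]
          rintro (h' | h')
          · exact hnotab e he h'
          · exact hb h'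
      rw [hne d hd2, hne (M.σ d) (hd2.trans (hsc1 d)), hne (M.σ (M.σ d)) (hd2.trans (hsc2 d))]
      rcases (sameCycle_sigma_iff M hcub (M.α b) d).mp hd2 with rfl | rfl | rfl
      · rw [if_pos rfl, if_neg (orbit_ne1 M hcub (M.α b)), if_neg (orbit_ne2 M hcub (M.α b))]
        simp
      · rw [hcub.1 (M.α b), if_neg (orbit_ne1 M hcub (M.α b)),
          if_neg (orbit_ne2 M hcub (M.α b)), if_pos rfl]
        simp
      · rw [hcub.1 (M.α b), if_neg (orbit_ne2 M hcub (M.α b)), if_pos rfl,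
          if_neg (orbit_ne1 M hcub (M.α b))]
        simp
    · rw [chi_neg M hd1 a, chi_neg M hd2 a]
      rw [hf_of_not d hd1 hd2,
        hf_of_not (M.σ d) (fun h' => hd1 (h'.trans (hsc1 d).symm))
          (fun h' => hd2 (h'.trans (hsc1 d).symm)),
        hf_of_not (M.σ (M.σ d)) (fun h' => hd1 (h'.trans (hsc2 d).symm))
          (fun h' => hd2 (h'.trans (hsc2 d).symm))]
      simp

end FCTaux

namespace FCTaux

variable (M : CombMap)

lemma gen_mem (hcub : M.Cubic) (hconn : M.Connected) (x y : M.D) (a : A) :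
    chi M x a + chi M y a ∈ (bdry' M).range := by
  have base : ∀ z : M.D, chi M z a + chi M z a ∈ (bdry' M).range := by
    intro z
    have : chi M z a + chi M z a = 0 := by
      funext d; exact Aadd _
    rw [this]
    exact zero_mem _
  induction hconn x y with
  | refl => exact base x
  | tail hxb step ih =>
    rename_i b c
    have hstep : chi M b a + chi M c a ∈ (bdry' M).range := by
      rcases step with h | h
      · have : chi M c a = chi M b a :=
          chi_eq_of_sameCycle M (Equiv.Perm.SameCycle.symm (⟨1, by simp [h]⟩ : M.σ.SameCycle b c)) a
        rw [this]
        exact base b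
      · subst h
        by_cases hsc : M.σ.SameCycle b (M.α b)
        · have : chi M (M.α b) a = chi M b a := chi_eq_of_sameCycle M hsc.symm a
          rw [this]
          exact base b
        · exact edge_gen M hcub b a hsc
    have key : chi M x a + chi M c a = (chi M x a + chi M b a) + (chi M b a + chi M c a) := by
      funext d
      simp only [Pi.add_apply]
      have h3 : ∀ p q r : A, p + r = (p + q) + (q + r) := by decide
      exact h3 _ _ _
    rw [key]
    exact add_mem ih hstep

lemma orbit_filter_eq (hcub : M.Cubic) (g : M.D → A) (x : M.D) :
    Finset.univ.filter (fun d => M.σ.SameCycle x d) = ({x, M.σ x, M.σ (M.σ x)} : Finset M.D) := by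
  ext d
  simp only [Finset.mem_filter, Finset.mem_univ, true_and, Finset.mem_insert,
    Finset.mem_singleton, sameCycle_sigma_iff M hcub x d]

lemma z_le_range (hcub : M.Cubic) (hconn : M.Connected) :
    zS M ≤ (bdry' M).range := by
  have main : ∀ (n : ℕ) (g : M.D → A), g ∈ zS M →
      (Finset.univ.filter (fun d => g d ≠ 0)).card ≤ n → g ∈ (bdry' M).range := by
    intro n
    induction n with
    | zero =>
      intro g hg hcard
      have hg0 : g = 0 := by
        funext d
        rw [Pi.zero_apply]
        by_contra hd
        have hmem : d ∈ Finset.univ.filter (fun d => g d ≠ 0) := by simp [hd]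
        rw [Finset.card_eq_zero.mp (Nat.le_zero.mp hcard)] at hmem
        exact absurd hmem (Finset.notMem_empty d)
      rw [hg0]
      exact zero_mem _
    | succ n ih =>
      intro g hg hcard
      by_cases hzero : g = 0
      · rw [hzero]; exact zero_mem _
      · obtain ⟨x, hx⟩ : ∃ x, g x ≠ 0 := by
          by_contra hc
          push_neg at hc
          exact hzero (funext hc)
        have hsum := hg.2
        have hgσ := hg.1
        have hgconst : ∀ z d, M.σ.SameCycle z d → g d = g z := by
          intro z d hd
          rcases (sameCycle_sigma_iff M hcub z d).mp hd with rfl | rfl | rfl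
          · rfl
          · exact hgσ z
          · rw [hgσ (M.σ z), hgσ z]
        have h12 : ∀ z : M.D, z ∉ ({M.σ z, M.σ (M.σ z)} : Finset M.D) := by
          intro z
          simp only [Finset.mem_insert, Finset.mem_singleton]
          push_neg
          exact ⟨(orbit_ne1 M hcub z).symm, (orbit_ne2 M hcub z).symm⟩
        have h23 : ∀ z : M.D, M.σ z ∉ ({M.σ (M.σ z)} : Finset M.D) := by
          intro z
          simp only [Finset.mem_singleton]
          exact (orbit_ne3 M hcub z).symm
        have orbsum : ∀ z : M.D, ∑ d ∈ Finset.univ.filter (fun d => M.σ.SameCycle z d), g d = g z := by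
          intro z
          rw [orbit_filter_eq M hcub g z, Finset.sum_insert (h12 z), Finset.sum_insert (h23 z),
            Finset.sum_singleton, hgσ z, hgσ (M.σ z), hgσ z]
          rw [← add_assoc, Aadd, zero_add]
        obtain ⟨y, hy1, hy2⟩ : ∃ y, ¬ M.σ.SameCycle x y ∧ g y ≠ 0 := by
          by_contra hc
          push_neg at hc
          have hsplit : ∑ d, g d = ∑ d ∈ Finset.univ.filter (fun d => M.σ.SameCycle x d), g d := by
            symm
            apply Finset.sum_subset (Finset.filter_subset _ _)
            intro d _ hd
            simp only [Finset.mem_filter, Finset.mem_univ, true_and] at hd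
            exact hc d hd
          rw [hsum, orbsum x] at hsplit
          exact hx hsplit.symm
        set g' : M.D → A := g + chi M x (g x) + chi M y (g x) with hg'def
        have hg'z : g' ∈ zS M := by
          constructor
          · intro d
            simp only [hg'def, Pi.add_apply, hgσ d, chi_vert M x (g x) d, chi_vert M y (g x) d]
          · simp only [hg'def, Pi.add_apply, Finset.sum_add_distrib, hsum,
              chi_sum M hcub x (g x), chi_sum M hcub y (g x), zero_add, Aadd]
        have hsupp : Finset.univ.filter (fun d => g' d ≠ 0) ⊆
            (Finset.univ.filter (fun d => g d ≠ 0)) \ ({x, M.σ x, M.σ (M.σ x)} : Finset M.D) := by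
          intro d hd
          simp only [Finset.mem_filter, Finset.mem_univ, true_and] at hd
          rw [Finset.mem_sdiff, Finset.mem_filter]
          by_cases hdx : M.σ.SameCycle x d
          · exfalso
            apply hd
            have hchiy : chi M y (g x) d = 0 := by
              apply chi_neg
              intro hyd
              exact hy1 (hdx.trans hyd.symm)
            simp only [hg'def, Pi.add_apply, hchiy, chi_pos M hdx (g x), add_zero,
              hgconst x d hdx, Aadd]
          · have hchix : chi M x (g x) d = 0 := chi_neg M hdx (g x)
            constructor
            · refine ⟨Finset.mem_univ d, ?_⟩
              by_cases hdy : M.σ.SameCycle y d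
              · rw [hgconst y d hdy]; exact hy2
              · intro hgd
                apply hd
                simp only [hg'def, Pi.add_apply, hchix, chi_neg M hdy (g x), hgd, add_zero, zero_add]
            · rw [← orbit_filter_eq M hcub g x, Finset.mem_filter]
              rintro ⟨-, hsc⟩
              exact hdx hsc
        have horbsub : ({x, M.σ x, M.σ (M.σ x)} : Finset M.D) ⊆
            Finset.univ.filter (fun d => g d ≠ 0) := by
          intro d hd
          rw [← orbit_filter_eq M hcub g x] at hd
          simp only [Finset.mem_filter, Finset.mem_univ, true_and] at hd ⊢
          rw [hgconst x d hd]
          exact hx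
        have horbcard : ({x, M.σ x, M.σ (M.σ x)} : Finset M.D).card = 3 := by
          rw [Finset.card_insert_of_notMem (h12 x), Finset.card_insert_of_notMem (h23 x),
            Finset.card_singleton]
        have hcard' : (Finset.univ.filter (fun d => g' d ≠ 0)).card ≤ n := by
          have hb1 := Finset.card_le_card hsupp
          rw [Finset.card_sdiff_of_subset horbsub, horbcard] at hb1
          omega
        have hmem' := ih g' hg'z hcard'
        have hgeq : g = g' + (chi M x (g x) + chi M y (g x)) := by
          funext d
          simp only [hg'def, Pi.add_apply]
          have h3 : ∀ p q r : A, p = ((p + q) + r) + (q + r) := by decide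
          exact h3 _ _ _
        rw [hgeq]
        exact add_mem hmem' (gen_mem M hcub hconn x y (g x))
  intro g hg
  exact main _ g hg le_rfl

lemma bdry_range_eq (hcub : M.Cubic) (hconn : M.Connected) :
    (bdry' M).range = zS M :=
  le_antisymm (bdryRange_le M hcub) (z_le_range M hcub hconn)

lemma psi_surj (hcub : M.Cubic) (hplanar : M.Planar) :
    ∀ f, f ∈ flowS M → ∃ c : M.D → A,
      (∀ d, c (M.φ d) = c d) ∧ (fun d => c d + c (M.α d)) = f := by
  obtain ⟨hconn, heuler⟩ := hplanar
  obtain ⟨d0⟩ := nonempty_D M ⟨hconn, heuler⟩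
  set V := M.numCycles M.σ
  set E := M.numCycles M.α
  set F := M.numCycles M.φ
  set cR := Nat.card (psi' M).range with hcR
  set cZ := Nat.card (zS M) with hcZ
  set cF := Nat.card (flowS M) with hcF
  have A1 : 4 ^ F = cR * 4 := by
    rw [← card_potS M, card_hom (psi' M), psiKer_card M hconn d0]
  have A2 : 4 ^ E = cZ * cF := by
    rw [← card_symS M, card_hom (bdry' M), bdry_range_eq M hcub hconn, hcZ, hcF,
      card_flowS_eq M]
  have A3 : 4 * cZ = 4 ^ V := by
    rw [card_zS M hcub d0]
  have hZpos : 0 < cZ := by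
    rw [hcZ]
    have : Nonempty (zS M) := ⟨0⟩
    exact Nat.card_pos
  have h1 : 4 ^ (V + F) = (4 * cZ) * (cR * 4) := by rw [pow_add, ← A3, ← A1]
  have h2 : 4 ^ (E + 2) = (cZ * cF) * 16 := by
    rw [pow_add, A2]
    norm_num
  rw [heuler] at h1
  rw [h1] at h2
  have hcards : cR = cF := by
    have h16 : (16 * cZ) * cR = (16 * cZ) * cF := by ring_nf; ring_nf at h2; omega
    exact Nat.eq_of_mul_eq_mul_left (by positivity) h16
  have hle := psiRange_le M hcub
  have hrange : (psi' M).range = flowS M := by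
    have hsub : ((psi' M).range : Set (M.D → A)) = (flowS M : Set (M.D → A)) := by
      apply Set.eq_of_subset_of_ncard_le hle
      rw [← Nat.card_coe_set_eq, ← Nat.card_coe_set_eq]
      have : Nat.card ((psi' M).range : Set (M.D → A)) = cR := rfl
      rw [this]
      have : Nat.card ((flowS M) : Set (M.D → A)) = cF := rfl
      rw [this, hcards]
    exact SetLike.coe_set_eq.mp hsub
  intro f hf
  rw [← hrange] at hf
  obtain ⟨⟨c, hc⟩, hcf⟩ := hf
  exact ⟨c, hc, hcf⟩

end FCTaux

namespace FCTaux

lemma nat_card_sigma' {ι : Type} [Fintype ι] (S : ι → Type) [∀ i, Finite (S i)] :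
    Nat.card (Σ i, S i) = ∑ i, Nat.card (S i) := by
  letI : ∀ i, Fintype (S i) := fun i => Fintype.ofFinite _
  simp only [Nat.card_eq_fintype_card]
  exact Fintype.card_sigma

variable (M : CombMap)

lemma card_PF (hcub : M.Cubic) (hplanar : M.Planar) :
    Nat.card {c : M.D → A // (∀ d, c (M.φ d) = c d) ∧ ∀ d, c d ≠ c (M.α d)}
      = 4 * Nat.card {f : M.D → A // f ∈ flowS M ∧ ∀ d, f d ≠ 0} := by
  classical
  have hconn := hplanar.1
  obtain ⟨d0⟩ := nonempty_D M hplanar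
  have hAne1 : ∀ a b : A, a ≠ b → a + b ≠ 0 := by decide
  have hAne2 : ∀ a b : A, a + b ≠ 0 → a ≠ b := by decide
  set PF := {c : M.D → A // (∀ d, c (M.φ d) = c d) ∧ ∀ d, c d ≠ c (M.α d)} with hPF
  set NZF := {f : M.D → A // f ∈ flowS M ∧ ∀ d, f d ≠ 0} with hNZF
  have hπmem : ∀ c : PF, (fun d => c.1 d + c.1 (M.α d)) ∈ flowS M ∧
      ∀ d, (fun d => c.1 d + c.1 (M.α d)) d ≠ 0 := by
    intro c
    refine ⟨psiRange_le M hcub ⟨⟨c.1, c.2.1⟩, rfl⟩, fun d => hAne1 _ _ (c.2.2 d)⟩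
  set π : PF → NZF := fun c => ⟨fun d => c.1 d + c.1 (M.α d), hπmem c⟩ with hπ
  have hfib : ∀ f : NZF, Nat.card {c : PF // π c = f} = 4 := by
    intro f
    obtain ⟨c0, hc0pot, hc0psi⟩ := psi_surj M hcub hplanar f.1 f.2.1
    rw [← hA4]
    refine Nat.card_congr (Equiv.ofBijective (fun x => x.1.1 d0) ⟨?_, ?_⟩)
    · intro u v huv
      set k : M.D → A := fun d => u.1.1 d + v.1.1 d with hk
      have hπu : ∀ d, u.1.1 d + u.1.1 (M.α d) = f.1 d := by
        intro d
        exact congrFun (congrArg Subtype.val u.2) d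
      have hπv : ∀ d, v.1.1 d + v.1.1 (M.α d) = f.1 d := by
        intro d
        exact congrFun (congrArg Subtype.val v.2) d
      have hα : ∀ d, k (M.α d) = k d := by
        intro d
        have hcomb : ∀ p q r s : A, p + q = r + s → q + s = p + r := by decide
        exact hcomb _ _ _ _ ((hπu d).trans (hπv d).symm)
      have hφk : ∀ d, k (M.φ d) = k d := by
        intro d
        show u.1.1 (M.φ d) + v.1.1 (M.φ d) = _
        rw [u.1.2.1 d, v.1.2.1 d]
      have hσ : ∀ d, k (M.σ d) = k d := by
        intro d
        rw [← phi_alpha M d, hφk (M.α d), hα d]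
      have hk0 : ∀ d, k d = 0 := by
        intro d
        rw [const_of_steps M hconn k hσ hα d d0]
        show u.1.1 d0 + v.1.1 d0 = 0
        have huv' : u.1.1 d0 = v.1.1 d0 := huv
        rw [huv']
        exact Aadd _
      apply Subtype.ext; apply Subtype.ext
      funext d
      exact (Aeq_of_add _ _ (hk0 d)).symm
    · intro a
      set c : M.D → A := fun d => c0 d + (a + c0 d0) with hc
      have hpot : ∀ d, c (M.φ d) = c d := by
        intro d
        show c0 (M.φ d) + _ = _
        rw [hc0pot d]
      have hpsi : ∀ d, c d + c (M.α d) = f.1 d := by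
        intro d
        have h5 : ∀ p q t r : A, p + q = r → (p + t) + (q + t) = r := by decide
        exact h5 _ _ _ _ (congrFun hc0psi d)
      have hne : ∀ d, c d ≠ c (M.α d) := by
        intro d
        apply hAne2
        rw [hpsi d]
        exact f.2.2 d
      refine ⟨⟨⟨c, hpot, hne⟩, ?_⟩, ?_⟩
      · apply Subtype.ext
        funext d
        exact hpsi d
      · show c0 d0 + (a + c0 d0) = a
        have h6 : ∀ p t : A, p + (t + p) = t := by decide
        exact h6 _ _
  letI : Fintype NZF := Fintype.ofFinite _
  calc Nat.card PF = Nat.card (Σ f : NZF, {c : PF // π c = f}) :=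
        (Nat.card_congr (Equiv.sigmaFiberEquiv π)).symm
    _ = ∑ f : NZF, Nat.card {c : PF // π c = f} := nat_card_sigma' _
    _ = ∑ _f : NZF, 4 := Finset.sum_congr rfl (fun f _ => hfib f)
    _ = 4 * Nat.card NZF := by
        rw [Finset.sum_const, Finset.card_univ, ← Nat.card_eq_fintype_card, smul_eq_mul, mul_comm]

noncomputable def eA : Fin 4 ≃ A :=
  Equiv.ofBijective (fun i => ![((0:ZMod 2),(0:ZMod 2)), (0,1), (1,0), (1,1)] i) (by decide)

lemma card_F4 :
    Nat.card {c : M.D → Fin 4 // M.FaceColoring 4 c}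
      = Nat.card {c : M.D → A // (∀ d, c (M.φ d) = c d) ∧ ∀ d, c d ≠ c (M.α d)} := by
  refine Nat.card_congr ⟨?_, ?_, ?_, ?_⟩
  · exact fun c => ⟨fun d => eA (c.1 d),
      fun d => congrArg eA (c.2.1 d), fun d h => (c.2.2 d) (eA.injective h)⟩
  · exact fun c => ⟨fun d => eA.symm (c.1 d),
      ⟨fun d => congrArg eA.symm (c.2.1 d), fun d h => (c.2.2 d) (eA.symm.injective h)⟩⟩
  · intro c
    apply Subtype.ext
    funext d
    simp
  · intro c
    apply Subtype.ext
    funext d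
    simp

def mC : ZMod 3 → A := fun x => if x = 0 then (1,0) else if x = 1 then (0,1) else (1,1)
def mCinv : A → ZMod 3 := fun a => if a = (1,0) then 0 else if a = (0,1) then 1 else 2

lemma hmm1 : ∀ x : ZMod 3, mCinv (mC x) = x := by decide
lemma hmm2 : ∀ a : A, a ≠ 0 → mC (mCinv a) = a := by decide
lemma hm0 : ∀ x : ZMod 3, mC x ≠ 0 := by decide
lemma hsum3 : ∀ x y z : ZMod 3, x ≠ y → y ≠ z → z ≠ x → mC x + mC y + mC z = 0 := by decide
lemma hzz : ∀ a b : A, a + a + b = 0 → b = 0 := by decide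

lemma card_NZF (hcub : M.Cubic) :
    Nat.card {f : M.D → A // f ∈ flowS M ∧ ∀ d, f d ≠ 0}
      = Nat.card {e : M.D → ZMod 3 // (∀ d, e (M.α d) = e d) ∧ ∀ d, e d ≠ e (M.σ d)} := by
  symm
  refine Nat.card_congr ⟨?_, ?_, ?_, ?_⟩
  · refine fun e => ⟨fun d => mC (e.1 d), ⟨⟨fun d => congrArg mC (e.2.1 d), fun d => ?_⟩,
      fun d => hm0 _⟩⟩
    refine hsum3 _ _ _ (e.2.2 d) (e.2.2 (M.σ d)) ?_
    have h7 := e.2.2 (M.σ (M.σ d))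
    rw [hcub.1 d] at h7
    exact h7
  · refine fun f => ⟨fun d => mCinv (f.1 d), ⟨fun d => congrArg mCinv (f.2.1.1 d), fun d => ?_⟩⟩
    have hfd : f.1 d ≠ f.1 (M.σ d) := by
      intro hh
      exact f.2.2 (M.σ (M.σ d)) (hzz _ _ (hh ▸ f.2.1.2 d))
    intro h'
    apply hfd
    have h'' : mCinv (f.1 d) = mCinv (f.1 (M.σ d)) := h'
    rw [← hmm2 _ (f.2.2 d), ← hmm2 _ (f.2.2 (M.σ d)), h'']
  · intro e
    apply Subtype.ext
    funext d
    exact hmm1 _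
  · intro f
    apply Subtype.ext
    funext d
    exact hmm2 _ (f.2.2 d)

end FCTaux

namespace FCTaux

variable (M : CombMap)

def sF (e : M.D → ZMod 3) : M.D → ZMod 3 := fun d => e (M.σ d) - e d
def tF (e : M.D → ZMod 3) : M.D → Bool := fun d => decide (sF M e (M.α d) = sF M e d)
def cF (e : M.D → ZMod 3) : M.D × Bool → ZMod 3 :=
  fun x => cond x.2 (e x.1 - sF M e x.1) (e x.1 + sF M e x.1)
def eF (c : M.D × Bool → ZMod 3) : M.D → ZMod 3 := fun d => -(c (d, false) + c (d, true))

section Decide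
lemma z1 : ∀ a b c : ZMod 3, a ≠ b → b ≠ c → c ≠ a → c - b = b - a := by decide
lemma z2 : ∀ a b : ZMod 3, a ≠ 0 → b ≠ 0 → a ≠ b → a = -b := by decide
lemma z3 : ∀ a t : ZMod 3, t ≠ 0 → a + t ≠ a - t := by decide
lemma zsum : ∀ a t : ZMod 3, -((a + t) + (a - t)) = a := by decide
lemma za1 : ∀ a t : ZMod 3, (a + t) + t = a - t := by decide
lemma za2 : ∀ a t : ZMod 3, ((a + t) + t) - t = a + t := by decide
lemma za3 : ∀ a t : ZMod 3, (a + -t) + -t = a + t := by decide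
lemma za4 : ∀ a t : ZMod 3, ((a + -t) + -t) - -t = a - t := by decide
lemma za5 : ∀ a t : ZMod 3, a - -t = a + t := by decide
lemma za6 : ∀ a t : ZMod 3, a + -t = a - t := by decide
lemma zf1 : ∀ p q : ZMod 3, p ≠ q → p - (-(p + q)) ≠ 0 := by decide
lemma zf2 : ∀ p q : ZMod 3, q = (-(p + q)) - (p - (-(p + q))) := by decide
lemma zf3 : ∀ a b c : ZMod 3, a ≠ 0 → b ≠ 0 → c ≠ 0 →
    (a + b) + ((b + c) + (c + a)) = 0 → b = a := by decide
lemma zf4 : ∀ a : ZMod 3, a ≠ 0 → -a ≠ a := by decide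
lemma zf5 : ∀ x y z : ZMod 3, x + x = y - z → z - y = x := by decide
lemma zf6 : ∀ x y z : ZMod 3, x ≠ 0 → x + x = y - z → y ≠ z := by decide
end Decide

lemma eF_cF (e : M.D → ZMod 3) : eF M (cF M e) = e := by
  funext d
  show -((e d + sF M e d) + (e d - sF M e d)) = e d
  exact zsum _ _

section Forward
variable (hcub : M.Cubic) (e : M.D → ZMod 3)
  (he1 : ∀ d, e (M.α d) = e d) (he2 : ∀ d, e d ≠ e (M.σ d))
include hcub he1 he2

lemma hs0 : ∀ d, sF M e d ≠ 0 := by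
  intro d
  exact sub_ne_zero.mpr (he2 d).symm

lemma hse : ∀ x, e (M.σ x) = e x + sF M e x := by
  intro x
  show e (M.σ x) = e x + (e (M.σ x) - e x)
  ring

lemma hsσ : ∀ d, sF M e (M.σ d) = sF M e d := by
  intro d
  have h7 := he2 (M.σ (M.σ d))
  rw [hcub.1 d] at h7
  exact z1 (e d) (e (M.σ d)) (e (M.σ (M.σ d))) (he2 d) (he2 (M.σ d)) h7

lemma hsα : ∀ d, tF M e d = true → sF M e (M.α d) = sF M e d := by
  intro d h
  exact of_decide_eq_true h

lemma hsα' : ∀ d, tF M e d = false → sF M e (M.α d) = -(sF M e d) := by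
  intro d h
  exact z2 _ _ (hs0 M hcub e he1 he2 (M.α d)) (hs0 M hcub e he1 he2 d) (of_decide_eq_false h)

lemma tF_sym : ∀ d, tF M e (M.α d) = tF M e d := by
  intro d
  show decide (sF M e (M.α (M.α d)) = sF M e (M.α d)) = decide (sF M e (M.α d) = sF M e d)
  rw [M.α_invol d]
  exact decide_eq_decide.mpr eq_comm

lemma cF_state : M.IsStateColoring (tF M e) 3 (cF M e) := by
  have Hs0 := hs0 M hcub e he1 he2
  have Hse := hse M hcub e he1 he2
  have Hsσ := hsσ M hcub e he1 he2
  have Hsα := hsα M hcub e he1 he2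
  have Hsα' := hsα' M hcub e he1 he2
  refine ⟨?_, ?_, ?_⟩
  · rintro ⟨d, b⟩
    cases htd : tF M e d
    · cases b
      · have hns : M.nextSeg (tF M e) (d, false) = (M.σ (M.α d), false) := by
          simp [CombMap.nextSeg, htd]
        rw [hns]
        show e (M.σ (M.α d)) + sF M e (M.σ (M.α d)) = e d + sF M e d
        rw [Hse (M.α d), Hsσ (M.α d), Hsα' d htd, he1 d]
        exact za3 _ _
      · have hns : M.nextSeg (tF M e) (d, true) = (M.σ⁻¹ (M.α d), true) := by
          simp [CombMap.nextSeg, htd]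
        rw [hns, sigma_inv_eq M hcub (M.α d)]
        show e (M.σ (M.σ (M.α d))) - sF M e (M.σ (M.σ (M.α d))) = e d - sF M e d
        rw [Hsσ (M.σ (M.α d)), Hse (M.σ (M.α d)), Hsσ (M.α d), Hse (M.α d), Hsα' d htd, he1 d]
        exact za4 _ _
    · cases b
      · have hns : M.nextSeg (tF M e) (d, false) = (M.σ⁻¹ (M.α d), true) := by
          simp [CombMap.nextSeg, htd]
        rw [hns, sigma_inv_eq M hcub (M.α d)]
        show e (M.σ (M.σ (M.α d))) - sF M e (M.σ (M.σ (M.α d))) = e d + sF M e d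
        rw [Hsσ (M.σ (M.α d)), Hse (M.σ (M.α d)), Hsσ (M.α d), Hse (M.α d), Hsα d htd, he1 d]
        exact za2 _ _
      · have hns : M.nextSeg (tF M e) (d, true) = (M.σ (M.α d), false) := by
          simp [CombMap.nextSeg, htd]
        rw [hns]
        show e (M.σ (M.α d)) + sF M e (M.σ (M.α d)) = e d - sF M e d
        rw [Hse (M.α d), Hsσ (M.α d), Hsα d htd, he1 d]
        exact za1 _ _
  · rintro ⟨d, b⟩
    cases htd : tF M e d
    · cases b
      · have hsm : M.sideMate (tF M e) (d, false) = (M.α d, true) := by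
          simp [CombMap.sideMate, htd]
        rw [hsm]
        show e (M.α d) - sF M e (M.α d) = e d + sF M e d
        rw [Hsα' d htd, he1 d]
        exact za5 _ _
      · have hsm : M.sideMate (tF M e) (d, true) = (M.α d, false) := by
          simp [CombMap.sideMate, htd]
        rw [hsm]
        show e (M.α d) + sF M e (M.α d) = e d - sF M e d
        rw [Hsα' d htd, he1 d]
        exact za6 _ _
    · cases b
      · have hsm : M.sideMate (tF M e) (d, false) = (M.α d, false) := by
          simp [CombMap.sideMate, htd]
        rw [hsm]
        show e (M.α d) + sF M e (M.α d) = e d + sF M e d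
        rw [Hsα d htd, he1 d]
      · have hsm : M.sideMate (tF M e) (d, true) = (M.α d, true) := by
          simp [CombMap.sideMate, htd]
        rw [hsm]
        show e (M.α d) - sF M e (M.α d) = e d - sF M e d
        rw [Hsα d htd, he1 d]
  · intro d
    show e d + sF M e d ≠ e d - sF M e d
    exact z3 _ _ (Hs0 d)

end Forward

end FCTaux

namespace FCTaux

variable (M : CombMap)

lemma master : ∀ p0 q0 p1 q1 p2 q2 : ZMod 3, p0 ≠ q0 → p1 ≠ q1 → p2 ≠ q2 →
    p1 = q0 → p2 = q1 → p0 = q2 →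
    (p1 - (-(p1 + q1)) = p0 - (-(p0 + q0))) ∧ (-(p0 + q0) ≠ -(p1 + q1)) ∧
    (-(p1 + q1) - (-(p0 + q0)) = p0 - (-(p0 + q0))) := by decide

lemma zswap : ∀ p q : ZMod 3, p ≠ q → q - (-(q + p)) ≠ p - (-(p + q)) := by decide
lemma zc1 : ∀ p q : ZMod 3, (-(p + q)) + (p - (-(p + q))) = p := by decide
lemma zc2 : ∀ p q : ZMod 3, (-(p + q)) - (p - (-(p + q))) = q := by decide

lemma inverse_props (hcub : M.Cubic) (t : M.D → Bool) (c : M.D × Bool → ZMod 3)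
    (ht : ∀ d, t (M.α d) = t d) (hc : M.IsStateColoring t 3 c) :
    (∀ d, eF M c (M.α d) = eF M c d) ∧ (∀ d, eF M c d ≠ eF M c (M.σ d)) ∧
      tF M (eF M c) = t ∧ cF M (eF M c) = c := by
  obtain ⟨hnext, hside, hne⟩ := hc
  -- side-mate relations
  have hsideT : ∀ d, t d = true →
      c (M.α d, false) = c (d, false) ∧ c (M.α d, true) = c (d, true) := by
    intro d htd
    have h1 := hside (d, false)
    have h2 := hside (d, true)
    rw [show M.sideMate t (d, false) = (M.α d, false) by simp [CombMap.sideMate, htd]] at h1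
    rw [show M.sideMate t (d, true) = (M.α d, true) by simp [CombMap.sideMate, htd]] at h2
    exact ⟨h1, h2⟩
  have hsideF : ∀ d, t d = false →
      c (M.α d, true) = c (d, false) ∧ c (M.α d, false) = c (d, true) := by
    intro d htd
    have h1 := hside (d, false)
    have h2 := hside (d, true)
    rw [show M.sideMate t (d, false) = (M.α d, true) by simp [CombMap.sideMate, htd]] at h1
    rw [show M.sideMate t (d, true) = (M.α d, false) by simp [CombMap.sideMate, htd]] at h2
    exact ⟨h1, h2⟩
  -- the key relation along circles
  have R : ∀ u, c (M.σ u, false) = c (u, true) := by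
    intro u
    have hb := hnext (M.α u, t (M.α u))
    have hcond : M.nextSeg t (M.α u, t (M.α u)) = (M.σ u, false) := by
      cases htu : t (M.α u) <;> simp [CombMap.nextSeg, htu, M.α_invol u]
    rw [hcond] at hb
    rw [ht u] at hb
    cases htu : t u
    · rw [htu] at hb
      rw [hb]
      exact (hsideF u htu).2
    · rw [htu] at hb
      rw [hb]
      exact (hsideT u htu).2
  -- master facts at each dart
  have hmaster : ∀ u,
      (c (M.σ u, false) - (-(c (M.σ u, false) + c (M.σ u, true)))
        = c (u, false) - (-(c (u, false) + c (u, true)))) ∧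
      (-(c (u, false) + c (u, true)) ≠ -(c (M.σ u, false) + c (M.σ u, true))) ∧
      (-(c (M.σ u, false) + c (M.σ u, true)) - (-(c (u, false) + c (u, true)))
        = c (u, false) - (-(c (u, false) + c (u, true)))) := by
    intro u
    have r0 := R u
    have r1 := R (M.σ u)
    have r2 := R (M.σ (M.σ u))
    rw [hcub.1 u] at r2
    exact master (c (u, false)) (c (u, true)) (c (M.σ u, false)) (c (M.σ u, true))
      (c (M.σ (M.σ u), false)) (c (M.σ (M.σ u), true))
      (hne u) (hne (M.σ u)) (hne (M.σ (M.σ u))) r0 r1 r2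
  -- e := eF M c; basic facts
  have he1 : ∀ d, eF M c (M.α d) = eF M c d := by
    intro d
    show -(c (M.α d, false) + c (M.α d, true)) = -(c (d, false) + c (d, true))
    cases htd : t d
    · obtain ⟨h1, h2⟩ := hsideF d htd
      rw [h1, h2, add_comm]
    · obtain ⟨h1, h2⟩ := hsideT d htd
      rw [h1, h2]
  have he2 : ∀ d, eF M c d ≠ eF M c (M.σ d) := fun d => (hmaster d).2.1
  -- sF of e in terms of c
  have hsf : ∀ u, sF M (eF M c) u
      = c (u, false) - (-(c (u, false) + c (u, true))) := by
    intro u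
    show -(c (M.σ u, false) + c (M.σ u, true)) - (-(c (u, false) + c (u, true))) = _
    exact (hmaster u).2.2
  refine ⟨he1, he2, ?_, ?_⟩
  · funext d
    have hd1 : sF M (eF M c) (M.α d) = c (M.α d, false) - (-(c (M.α d, false) + c (M.α d, true))) :=
      hsf (M.α d)
    have hd2 : sF M (eF M c) d = c (d, false) - (-(c (d, false) + c (d, true))) := hsf d
    show decide (sF M (eF M c) (M.α d) = sF M (eF M c) d) = t d
    rw [hd1, hd2]
    cases htd : t d
    · obtain ⟨h1, h2⟩ := hsideF d htd
      rw [h1, h2]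
      exact decide_eq_false (zswap _ _ (hne d))
    · obtain ⟨h1, h2⟩ := hsideT d htd
      rw [h1, h2]
      exact decide_eq_true rfl
  · funext x
    obtain ⟨d, b⟩ := x
    cases b
    · show eF M c d + sF M (eF M c) d = c (d, false)
      rw [hsf d]
      exact zc1 _ _
    · show eF M c d - sF M (eF M c) d = c (d, true)
      rw [hsf d]
      exact zc2 _ _

lemma sigma_subtype_ext {ι C : Type*} {P : ι → C → Prop} (x y : Σ i : ι, {c : C // P i c})
    (h1 : x.1 = y.1) (h2 : x.2.1 = y.2.1) : x = y := by
  obtain ⟨i, ci, hci⟩ := x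
  obtain ⟨j, cj, hcj⟩ := y
  dsimp at h1 h2
  subst h1
  subst h2
  rfl

noncomputable def stateEquiv (hcub : M.Cubic) :
    {e : M.D → ZMod 3 // (∀ d, e (M.α d) = e d) ∧ ∀ d, e d ≠ e (M.σ d)} ≃
    (Σ t : {t : M.D → Bool // ∀ d, t (M.α d) = t d},
      {c : M.D × Bool → Fin 3 // M.IsStateColoring t.1 3 c}) where
  toFun e := ⟨⟨tF M e.1, tF_sym M hcub e.1 e.2.1 e.2.2⟩,
    ⟨cF M e.1, cF_state M hcub e.1 e.2.1 e.2.2⟩⟩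
  invFun x := ⟨eF M x.2.1,
    (inverse_props M hcub x.1.1 x.2.1 x.1.2 x.2.2).1,
    (inverse_props M hcub x.1.1 x.2.1 x.1.2 x.2.2).2.1⟩
  left_inv := by
    intro e
    apply Subtype.ext
    exact eF_cF M e.1
  right_inv := by
    rintro ⟨⟨t, ht⟩, c, hc⟩
    obtain ⟨-, -, h3, h4⟩ := inverse_props M hcub t c ht hc
    exact sigma_subtype_ext _ _ (Subtype.ext h3) h4

lemma card_EC3 (hcub : M.Cubic) :
    Nat.card {e : M.D → ZMod 3 // (∀ d, e (M.α d) = e d) ∧ ∀ d, e d ≠ e (M.σ d)}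
      = ∑ t : {t : M.D → Bool // ∀ d, t (M.α d) = t d},
          Nat.card {c : M.D × Bool → Fin 3 // M.IsStateColoring t.1 3 c} := by
  rw [Nat.card_congr (stateEquiv M hcub)]
  exact nat_card_sigma' _

end FCTaux

/-- For a connected cubic plane graph `M`, the number of proper 4-face-colorings
of `M` equals 4 times the sum, over all states `t` (assignments of half-twists to
the edges), of the number of proper 3-face-colorings of the state graph `Γ_t`. -/
theorem four_colorings_eq_four_mul_sum_of_state_three_colorings
    (M : CombMap) (hcub : M.Cubic) (hplanar : M.Planar) :
    Nat.card {c : M.D → Fin 4 // M.FaceColoring 4 c} =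
      4 * ∑ t : {t : M.D → Bool // ∀ d, t (M.α d) = t d},
            Nat.card {c : M.D × Bool → Fin 3 // M.IsStateColoring t.1 3 c} := by
  rw [FCTaux.card_F4 M, FCTaux.card_PF M hcub hplanar, FCTaux.card_NZF M hcub,
    FCTaux.card_EC3 M hcub]
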